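/- Let q be an odd prime power and let μ' ∈ F_q be nonzero. Then the homogeneous quartic polynomial F'(X,Y,Z) = X²Y² − μ'Z²(X² + Y²) is absolutely irreducible, i.e., irreducible as a polynomial over the algebraic closure of F_q. -/

import Mathlib

set_option maxHeartbeats 1000000
set_option synthInstance.maxHeartbeats 400000

noncomputable section

open MvPolynomial

/-- The quartic curve `F'(X,Y,Z) = X²Y² − μ'Z²(X² + Y²)`. -/
def quarticF' {K : Type*} [Field K] (μ' : K) : MvPolynomial (Fin 3) K :=
  X 0 ^ 2 * X 1 ^ 2 - C μ' * X 2 ^ 2 * (X 0 ^ 2 + X 1 ^ 2)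

section Aux

variable {K : Type*} [Field K]

private lemma finSuccEquiv_C' {n : ℕ} (c : K) :
    (MvPolynomial.finSuccEquiv K n) (C c) = Polynomial.C (C c) := by
  simp [MvPolynomial.finSuccEquiv_apply]

private lemma prime_lin (c : K) : Prime (X 0 - C c * X 1 : MvPolynomial (Fin 2) K) := by
  refine (MulEquiv.prime_iff (MvPolynomial.finSuccEquiv K 1).toMulEquiv).mp ?_
  have h : (MvPolynomial.finSuccEquiv K 1).toMulEquiv (X 0 - C c * X 1)
      = Polynomial.X - Polynomial.C (C c * X 0) := by
    show (MvPolynomial.finSuccEquiv K 1) (X 0 - C c * X 1) = _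
    have h1 : (X 1 : MvPolynomial (Fin 2) K) = X (Fin.succ 0) := rfl
    simp [h1, finSuccEquiv_X_zero, finSuccEquiv_X_succ, finSuccEquiv_C', map_sub, map_mul]
  rw [h]
  exact Polynomial.prime_X_sub_C _

private lemma not_dvd_of_aeval {p q : MvPolynomial (Fin 2) K} (v : Fin 2 → K)
    (h1 : aeval v p = 0) (h2 : aeval v q ≠ 0) : ¬ p ∣ q := by
  intro h
  obtain ⟨c, rfl⟩ := h
  exact h2 (by rw [map_mul, h1, zero_mul])

private lemma quartic_image (μ : K) : (MvPolynomial.finSuccEquiv K 2) (quarticF' μ)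
    = Polynomial.C (X 0 ^ 2 - C μ * X 1 ^ 2) * Polynomial.X ^ 2
      + Polynomial.C (-(C μ * X 0 ^ 2 * X 1 ^ 2)) := by
  have h1 : (X 1 : MvPolynomial (Fin 3) K) = X (Fin.succ 0) := rfl
  have h2 : (X 2 : MvPolynomial (Fin 3) K) = X (Fin.succ 1) := rfl
  simp only [quarticF', h1, h2, map_sub, map_mul, map_add, map_pow,
    finSuccEquiv_X_zero, finSuccEquiv_X_succ, finSuccEquiv_C']
  simp only [Polynomial.C_sub, Polynomial.C_mul, Polynomial.C_pow, Polynomial.C_neg]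
  ring

theorem quartic_irred_aux (h2 : (2 : K) ≠ 0) (μ s : K) (hμ : μ ≠ 0) (hs : s ^ 2 = μ) :
    Irreducible (quarticF' μ) := by
  classical
  have hs0 : s ≠ 0 := by rintro rfl; rw [← hs] at hμ; simp at hμ
  letI : NormalizationMonoid (MvPolynomial (Fin 2) K) :=
    (UniqueFactorizationMonoid.normalizationMonoid (α := MvPolynomial (Fin 2) K)).toNormalizationMonoid
  letI : NormalizedGCDMonoid (MvPolynomial (Fin 2) K) :=
    UniqueFactorizationMonoid.toNormalizedGCDMonoid _
  set a : MvPolynomial (Fin 2) K := X 0 ^ 2 - C μ * X 1 ^ 2 with ha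
  set b : MvPolynomial (Fin 2) K := -(C μ * X 0 ^ 2 * X 1 ^ 2) with hb
  set p1 : MvPolynomial (Fin 2) K := X 0 - C s * X 1 with hp1
  set p2 : MvPolynomial (Fin 2) K := X 0 - C (-s) * X 1 with hp2
  have hCμ : (C μ : MvPolynomial (Fin 2) K) = C s * C s := by rw [← C_mul, ← sq, hs]
  have hafact : a = p1 * p2 := by rw [ha, hp1, hp2, hCμ, C_neg]; ring
  have hprime1 : Prime p1 := prime_lin s
  have hprime2 : Prime p2 := prime_lin (-s)
  have ha0 : a ≠ 0 := hafact ▸ mul_ne_zero hprime1.ne_zero hprime2.ne_zero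
  have haunit : ¬ IsUnit a := by
    intro h
    have h' := h.map (aeval (R := K) (fun _ : Fin 2 => (0 : K)))
    rw [ha] at h'
    simp at h'
  have hndvd : ¬ p1 ∣ p2 := by
    refine not_dvd_of_aeval (![s, 1]) ?_ ?_
    · simp [hp1]
    · have hval : aeval (![s, 1]) p2 = s + s := by simp [hp2]
      rw [hval, ← two_mul]
      exact mul_ne_zero h2 hs0
  have hsq : Squarefree a := by
    rw [hafact]
    exact squarefree_mul_iff.mpr ⟨hprime1.irreducible.isRelPrime_iff_not_dvd.mpr hndvd,
      hprime1.squarefree, hprime2.squarefree⟩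
  -- transfer to a univariate polynomial
  refine (MulEquiv.irreducible_iff ((MvPolynomial.finSuccEquiv K 2).toMulEquiv)).mp ?_
  have himg : (MvPolynomial.finSuccEquiv K 2).toMulEquiv (quarticF' μ)
      = Polynomial.C a * Polynomial.X ^ 2 + Polynomial.C b := quartic_image μ
  rw [himg]
  -- primitivity
  have hprim : (Polynomial.C a * Polynomial.X ^ 2 + Polynomial.C b).IsPrimitive := by
    intro r hr
    rw [Polynomial.C_dvd_iff_dvd_coeff] at hr
    have hra : r ∣ a := by simpa using hr 2
    have hrb : r ∣ b := by simpa using hr 0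
    have hY : r ∣ (X 0 : MvPolynomial (Fin 2) K) ^ 4 := by
      have h4 : (X 0 : MvPolynomial (Fin 2) K) ^ 4 = X 0 ^ 2 * a - b := by
        rw [ha, hb]; ring
      rw [h4]; exact dvd_sub (hra.mul_left _) hrb
    have hZ : r ∣ (X 1 : MvPolynomial (Fin 2) K) ^ 4 := by
      have h4 : C μ * C μ * (X 1 : MvPolynomial (Fin 2) K) ^ 4
          = (-b) - C μ * X 1 ^ 2 * a := by rw [ha, hb]; ring
      have hdvd : r ∣ C μ * C μ * (X 1 : MvPolynomial (Fin 2) K) ^ 4 := by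
        rw [h4]; exact dvd_sub (dvd_neg.mpr hrb) (hra.mul_left _)
      have hu : IsUnit (C μ * C μ : MvPolynomial (Fin 2) K) :=
        ((isUnit_iff_ne_zero.mpr hμ).map (C : K →+* MvPolynomial (Fin 2) K)).mul
          ((isUnit_iff_ne_zero.mpr hμ).map (C : K →+* MvPolynomial (Fin 2) K))
      exact (hu.dvd_mul_left).mp hdvd
    have hX0 : Prime (X 0 : MvPolynomial (Fin 2) K) := by simpa using prime_lin (0 : K)
    have hrel : IsRelPrime ((X 0 : MvPolynomial (Fin 2) K) ^ 4) ((X 1 : MvPolynomial (Fin 2) K) ^ 4) := by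
      refine IsRelPrime.pow ?_
      refine hX0.irreducible.isRelPrime_iff_not_dvd.mpr ?_
      refine not_dvd_of_aeval (![0, 1]) (by simp) (by simp)
    exact hrel hY hZ
  rw [hprim.irreducible_iff_irreducible_map_fraction_map
    (K := FractionRing (MvPolynomial (Fin 2) K))]
  set L := FractionRing (MvPolynomial (Fin 2) K)
  set f := algebraMap (MvPolynomial (Fin 2) K) L with hf
  have hinj : Function.Injective f := IsFractionRing.injective _ _
  have hmap : (Polynomial.C a * Polynomial.X ^ 2 + Polynomial.C b).map f
      = Polynomial.C (f a) * Polynomial.X ^ 2 + Polynomial.C (f b) := by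
    simp [Polynomial.map_add, Polynomial.map_mul, Polynomial.map_pow]
  rw [hmap]
  have ha'0 : f a ≠ 0 := fun h => ha0 (hinj (by rw [h, map_zero]))
  have hdeg : (Polynomial.C (f a) * Polynomial.X ^ 2 + Polynomial.C (f b)).natDegree = 2 := by
    have := Polynomial.natDegree_quadratic (a := f a) (b := (0 : L)) (c := f b) ha'0
    simpa using this
  rw [Polynomial.irreducible_iff_roots_eq_zero_of_degree_le_three (by rw [hdeg])
    (by rw [hdeg]; norm_num)]
  rw [Multiset.eq_zero_iff_forall_notMem]
  intro z hz
  have hroot := (Polynomial.mem_roots'.mp hz).2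
  have hz' : f a * z ^ 2 + f b = 0 := by
    simpa [Polynomial.IsRoot, Polynomial.eval_add, Polynomial.eval_mul] using hroot
  set w : L := f (C s * X 0 * X 1) with hw
  have hw0 : w ≠ 0 := by
    intro h
    have hne : (C s * X 0 * X 1 : MvPolynomial (Fin 2) K) ≠ 0 := by
      refine mul_ne_zero (mul_ne_zero ?_ ?_) ?_
      · exact fun hc => hs0 (by simpa using hc)
      · exact X_ne_zero 0
      · exact X_ne_zero 1
    exact hne (hinj (by rw [map_zero]; exact h))
  have hwsq : w ^ 2 = - f b := by
    rw [hw, hb, ← map_pow, ← map_neg]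
    congr 1
    rw [hCμ]; ring
  have hkey : (f a * z) ^ 2 = f a * w ^ 2 := by
    rw [hwsq]
    linear_combination f a * hz'
  have ht2 : (f a * z * w⁻¹) ^ 2 = f a := by
    calc (f a * z * w⁻¹) ^ 2 = (f a * z) ^ 2 * (w⁻¹) ^ 2 := by ring
    _ = f a * w ^ 2 * (w⁻¹) ^ 2 := by rw [hkey]
    _ = f a * (w * w⁻¹) ^ 2 := by ring
    _ = f a := by rw [mul_inv_cancel₀ hw0]; ring
  obtain ⟨y, hy⟩ := IsIntegrallyClosed.exists_algebraMap_eq_of_isIntegral_pow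
    (R := MvPolynomial (Fin 2) K) (x := f a * z * w⁻¹) (n := 2) two_pos
    (by rw [ht2]; exact isIntegral_algebraMap)
  have hya : y * y = a := by
    apply hinj
    rw [map_mul]
    show f y * f y = f a
    rw [show f y = algebraMap _ L y from rfl, hy, ← sq, ht2]
  have hyu : IsUnit y := hsq y (hya ▸ dvd_refl a)
  exact haunit (hya ▸ (hyu.mul hyu))

end Aux

/-- for `q` odd and `μ' ≠ 0`, the quartic `X²Y² − μ'Z²(X² + Y²)` is
absolutely irreducible. -/
theorem stmt14 (F : Type*) [Field F] [Fintype F] (hodd : Odd (Fintype.card F))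
    (μ' : F) (hμ' : μ' ≠ 0) :
    Irreducible (MvPolynomial.map (algebraMap F (AlgebraicClosure F)) (quarticF' μ')) := by
  set K := AlgebraicClosure F
  set φ := algebraMap F K with hφ
  have hinj : Function.Injective φ := RingHom.injective φ
  have hmap : MvPolynomial.map φ (quarticF' μ') = quarticF' (φ μ') := by
    simp [quarticF', map_sub, map_mul, map_add, map_pow, map_X, map_C]
  rw [hmap]
  have hμ : φ μ' ≠ 0 := fun h => hμ' (hinj (by rw [h, map_zero]))
  have h2F : (2 : F) ≠ 0 := by
    intro h
    haveI := ringChar.charP F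
    obtain ⟨n, hp, hcard⟩ := FiniteField.card F (ringChar F)
    have hdvd : ringChar F ∣ 2 := by
      rw [← Nat.cast_ofNat (n := 2)] at h
      exact (CharP.cast_eq_zero_iff F (ringChar F) 2).mp h
    have h2 : ringChar F = 2 := ((Nat.prime_dvd_prime_iff_eq hp Nat.prime_two).mp hdvd)
    rw [hcard, h2] at hodd
    have : Even ((2 : ℕ) ^ (n : ℕ)) :=
      (Nat.even_pow).mpr ⟨even_two, Nat.pos_iff_ne_zero.mp n.pos⟩
    exact (Nat.not_even_iff_odd.mpr hodd) this
  have h2K : (2 : K) ≠ 0 := by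
    intro h
    apply h2F
    apply hinj
    rw [map_ofNat φ 2, h, map_zero]
  obtain ⟨s, hs⟩ := IsAlgClosed.exists_pow_nat_eq (k := K) (φ μ') two_pos
  exact quartic_irred_aux h2K _ s hμ hs
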